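/- Let B ∈ ℝ^{m×d} have full column rank, let a ∈ ℝ^d be nonzero, and let p ≥ 1. Let B′ ∈ ℝ^{(m+1)×d} be obtained from B by appending aᵀ as an additional row. Then the ℓp sensitivity of a with respect to B′ satisfies σ_p^{B′}(a) = 1 / (1 + 1/σ_p^B(a)). -/

import Mathlib

open Matrix BigOperators

/-- The ℓp sensitivity of a vector `a` with respect to a matrix `B`:
`σ_p^B(a) = sup { |⟨a,x⟩|^p / ‖Bx‖_p^p : x, Bx ≠ 0 }`. -/
noncomputable def sens (p : ℝ) {m d : ℕ} (B : Matrix (Fin m) (Fin d) ℝ)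
    (a : Fin d → ℝ) : ℝ :=
  sSup {r : ℝ | ∃ x : Fin d → ℝ, B.mulVec x ≠ 0 ∧
    r = |a ⬝ᵥ x| ^ p / ∑ i, |B.mulVec x i| ^ p}

/-- **Sensitivity after appending the row:** if `B'` is `B` with the row `aᵀ`
appended, then `σ_p^{B'}(a) = 1 / (1 + 1/σ_p^B(a))`. -/
theorem sensitivity_append_row
    {m d : ℕ} (B : Matrix (Fin m) (Fin d) ℝ)
    (hB : LinearIndependent ℝ Bᵀ)
    (a : Fin d → ℝ) (ha : a ≠ 0) (p : ℝ) (hp : 1 ≤ p) :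
    sens p (Matrix.of (Fin.snoc B a) : Matrix (Fin (m + 1)) (Fin d) ℝ) a
      = 1 / (1 + 1 / sens p B a) := by
  classical
  have hd : d ≠ 0 := by
    rintro rfl
    exact ha (Subsingleton.elim a 0)
  haveI : Nonempty (Fin d) := ⟨⟨0, Nat.pos_of_ne_zero hd⟩⟩
  have hp0 : (0:ℝ) < p := lt_of_lt_of_le one_pos hp
  set t : (Fin d → ℝ) → ℝ := fun x => |a ⬝ᵥ x| ^ p with ht_def
  set s : (Fin d → ℝ) → ℝ := fun x => ∑ i, |B.mulVec x i| ^ p with hs_def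
  -- injectivity of B
  have hinj : ∀ x : Fin d → ℝ, B.mulVec x = 0 → x = 0 := by
    intro x hx
    have hsum : ∑ j, x j • Bᵀ j = 0 := by
      funext i
      have : (∑ j, x j • Bᵀ j) i = ∑ j, x j * B i j := by
        simp [Finset.sum_apply, Matrix.transpose_apply]
      rw [this]
      have := congrFun hx i
      simpa [Matrix.mulVec, dotProduct, mul_comm] using this
    have h := Fintype.linearIndependent_iff.mp hB x hsum
    funext j; exact h j
  -- basic positivity
  have ht_nonneg : ∀ x, 0 ≤ t x := fun x => Real.rpow_nonneg (abs_nonneg _) p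
  have hs_nonneg : ∀ x, 0 ≤ s x := fun x =>
    Finset.sum_nonneg fun i _ => Real.rpow_nonneg (abs_nonneg _) p
  have hs_pos : ∀ x, B.mulVec x ≠ 0 → 0 < s x := by
    intro x hx
    obtain ⟨i, hi⟩ := Function.ne_iff.mp hx
    refine Finset.sum_pos' (fun i _ => Real.rpow_nonneg (abs_nonneg _) p)
      ⟨i, Finset.mem_univ i, Real.rpow_pos_of_pos (abs_pos.mpr hi) p⟩
  -- the set S
  set S : Set ℝ := {r : ℝ | ∃ x : Fin d → ℝ, B.mulVec x ≠ 0 ∧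
    r = |a ⬝ᵥ x| ^ p / ∑ i, |B.mulVec x i| ^ p} with hS_def
  -- continuity of s
  have hrpow : Continuous fun y : ℝ => y ^ p := by
    rw [continuous_iff_continuousAt]
    intro y
    exact Real.continuousAt_rpow_const y p (Or.inr hp0.le)
  have hs_cont : Continuous s := by
    apply continuous_finset_sum
    intro i _
    have h1 : Continuous fun x : Fin d → ℝ => B.mulVec x i := by
      simpa [Matrix.mulVec, dotProduct] using
        (continuous_finset_sum (Finset.univ : Finset (Fin d))
          fun j _ => (continuous_const.mul (continuous_apply j)))
    exact hrpow.comp h1.abs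
  -- minimum of s on the sphere
  obtain ⟨x₀, hx₀mem, hx₀min⟩ := (isCompact_sphere (0 : Fin d → ℝ) 1).exists_isMinOn
    (NormedSpace.sphere_nonempty.mpr zero_le_one) hs_cont.continuousOn
  have hx₀norm : ‖x₀‖ = 1 := by simpa using mem_sphere_zero_iff_norm.mp hx₀mem
  have hx₀ne : x₀ ≠ 0 := by
    intro h; rw [h] at hx₀norm; simp at hx₀norm
  have hcmin : 0 < s x₀ := hs_pos x₀ (fun h => hx₀ne (hinj x₀ h))
  set A : ℝ := ∑ i, |a i| with hA_def
  have hA_nonneg : 0 ≤ A := Finset.sum_nonneg fun i _ => abs_nonneg _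
  -- boundedness of S
  have hbdd : BddAbove S := by
    refine ⟨A ^ p / s x₀, ?_⟩
    rintro r ⟨x, hx, rfl⟩
    have hxne : x ≠ 0 := fun h => hx (by rw [h, Matrix.mulVec_zero])
    set c : ℝ := ‖x‖ with hc_def
    have hc : 0 < c := norm_pos_iff.mpr hxne
    set u : Fin d → ℝ := c⁻¹ • x with hu_def
    have hxcu : x = c • u := by
      rw [hu_def, smul_smul, mul_inv_cancel₀ hc.ne', one_smul]
    have hu_norm : ‖u‖ = 1 := by
      rw [hu_def, norm_smul, norm_inv, norm_norm]
      field_simp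
    have hu_mem : u ∈ Metric.sphere (0 : Fin d → ℝ) 1 :=
      mem_sphere_zero_iff_norm.mpr hu_norm
    have habs : ∀ w : ℝ, |c * w| ^ p = c ^ p * |w| ^ p := by
      intro w
      rw [abs_mul, Real.mul_rpow (abs_nonneg _) (abs_nonneg _), abs_of_pos hc]
    have htx : t x = c ^ p * t u := by
      simp only [ht_def]
      rw [hxcu, dotProduct_smul, smul_eq_mul, habs]
    have hsx : s x = c ^ p * s u := by
      simp only [hs_def]
      rw [hxcu, Matrix.mulVec_smul, Finset.mul_sum]
      exact Finset.sum_congr rfl fun i _ => by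
        rw [Pi.smul_apply, smul_eq_mul, habs]
    have hcan : t x / s x = t u / s u := by
      rw [htx, hsx, mul_div_mul_left _ _ (Real.rpow_pos_of_pos hc p).ne']
    have htu : t u ≤ A ^ p := by
      have h1 : |a ⬝ᵥ u| ≤ A := by
        calc |a ⬝ᵥ u| = |∑ i, a i * u i| := rfl
          _ ≤ ∑ i, |a i * u i| := Finset.abs_sum_le_sum_abs _ _
          _ ≤ ∑ i, |a i| := Finset.sum_le_sum fun i _ => by
              rw [abs_mul]
              have h2 : |u i| ≤ 1 := by
                have h3 := norm_le_pi_norm u i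
                rw [hu_norm] at h3
                simpa using h3
              nlinarith [abs_nonneg (a i)]
      exact Real.rpow_le_rpow (abs_nonneg _) h1 hp0.le
    have hsu : s x₀ ≤ s u := hx₀min hu_mem
    calc t x / s x = t u / s u := hcan
      _ ≤ A ^ p / s x₀ := div_le_div₀ (Real.rpow_nonneg hA_nonneg p) htu hcmin hsu
  -- nonemptiness of S and positivity of sSup
  have haa : 0 < a ⬝ᵥ a := by
    obtain ⟨i, hi⟩ := Function.ne_iff.mp ha
    exact Finset.sum_pos' (fun i _ => mul_self_nonneg _)
      ⟨i, Finset.mem_univ i, by simpa using mul_self_pos.mpr hi⟩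
  have hBa : B.mulVec a ≠ 0 := fun h => ha (hinj a h)
  have hmem : t a / s a ∈ S := ⟨a, hBa, rfl⟩
  have hpos_el : 0 < t a / s a :=
    div_pos (Real.rpow_pos_of_pos (abs_pos.mpr haa.ne') p) (hs_pos a hBa)
  set M : ℝ := sSup S with hM_def
  have hM_pos : 0 < M := lt_of_lt_of_le hpos_el (le_csSup hbdd hmem)
  -- the function g
  set g : ℝ → ℝ := fun r => max r 0 / (1 + max r 0) with hg_def
  have hg_mono : Monotone g := by
    intro r r' h
    have h1 : max r 0 ≤ max r' 0 := max_le_max h le_rfl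
    have h2 : (0:ℝ) ≤ max r 0 := le_max_right _ _
    have h3 : (0:ℝ) ≤ max r' 0 := le_max_right _ _
    simp only [hg_def]
    rw [div_le_div_iff₀ (by linarith) (by linarith)]
    nlinarith
  have hg_cont : Continuous g := by
    apply Continuous.div
    · exact continuous_id.max continuous_const
    · exact continuous_const.add (continuous_id.max continuous_const)
    · intro r
      have : (0:ℝ) ≤ max r 0 := le_max_right _ _
      positivity
  -- g value on nonneg ratios
  have hg_val : ∀ x : Fin d → ℝ, B.mulVec x ≠ 0 → g (t x / s x) = t x / (s x + t x) := by
    intro x hx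
    have hs0 := hs_pos x hx
    have ht0 := ht_nonneg x
    have hmax : max (t x / s x) 0 = t x / s x := max_eq_left (div_nonneg ht0 hs0.le)
    simp only [hg_def, hmax]
    have h1 : s x + t x ≠ 0 := by linarith
    have h2 : 1 + t x / s x ≠ 0 := by positivity
    field_simp
  -- sum formula for B'
  have hsum' : ∀ x : Fin d → ℝ,
      ∑ i, |(Matrix.of (Fin.snoc B a) : Matrix (Fin (m + 1)) (Fin d) ℝ).mulVec x i| ^ p
        = s x + t x := by
    intro x
    rw [Fin.sum_univ_castSucc]
    congr 1
    · refine Finset.sum_congr rfl fun j _ => ?_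
      have : (Matrix.of (Fin.snoc B a) : Matrix (Fin (m + 1)) (Fin d) ℝ).mulVec x j.castSucc
          = B.mulVec x j := by
        have e : (Matrix.of (Fin.snoc B a) : Matrix (Fin (m + 1)) (Fin d) ℝ) j.castSucc = B j :=
          by exact Fin.snoc_castSucc (α := fun _ => Fin d → ℝ) (p := B) (x := a) (i := j)
        simp only [Matrix.mulVec, e]
      rw [this]
    · have : (Matrix.of (Fin.snoc B a) : Matrix (Fin (m + 1)) (Fin d) ℝ).mulVec x (Fin.last m)
          = a ⬝ᵥ x := by
        have e : (Matrix.of (Fin.snoc B a) : Matrix (Fin (m + 1)) (Fin d) ℝ) (Fin.last m) = a :=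
          by exact Fin.snoc_last (α := fun _ => Fin d → ℝ) (p := B) (x := a)
        simp only [Matrix.mulVec, e]
      rw [this]
  -- nonvanishing equivalence
  have hB'ne : ∀ x : Fin d → ℝ,
      (Matrix.of (Fin.snoc B a) : Matrix (Fin (m + 1)) (Fin d) ℝ).mulVec x ≠ 0
        ↔ B.mulVec x ≠ 0 := by
    intro x
    constructor
    · intro h hx
      exact h (by rw [hinj x hx, Matrix.mulVec_zero])
    · intro hx h
      apply hx
      funext j
      have h1 := congrFun h j.castSucc
      have h2 : (Matrix.of (Fin.snoc B a) : Matrix (Fin (m + 1)) (Fin d) ℝ).mulVec x j.castSucc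
          = B.mulVec x j := by
        have e : (Matrix.of (Fin.snoc B a) : Matrix (Fin (m + 1)) (Fin d) ℝ) j.castSucc = B j :=
          by exact Fin.snoc_castSucc (α := fun _ => Fin d → ℝ) (p := B) (x := a) (i := j)
        simp only [Matrix.mulVec, e]
      rw [h2] at h1
      simpa using h1
  -- the set for B' is g '' S
  have hS'eq : {r : ℝ | ∃ x : Fin d → ℝ,
      (Matrix.of (Fin.snoc B a) : Matrix (Fin (m + 1)) (Fin d) ℝ).mulVec x ≠ 0 ∧
      r = |a ⬝ᵥ x| ^ p /
        ∑ i, |(Matrix.of (Fin.snoc B a) : Matrix (Fin (m + 1)) (Fin d) ℝ).mulVec x i| ^ p}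
      = g '' S := by
    ext r
    constructor
    · rintro ⟨x, hx, rfl⟩
      have hxB : B.mulVec x ≠ 0 := (hB'ne x).mp hx
      refine ⟨t x / s x, ⟨x, hxB, rfl⟩, ?_⟩
      rw [hg_val x hxB, hsum']
    · rintro ⟨r', ⟨x, hx, rfl⟩, rfl⟩
      exact ⟨x, (hB'ne x).mpr hx, by rw [hg_val x hx, hsum']⟩
  -- conclude
  have hkey : sens p (Matrix.of (Fin.snoc B a) : Matrix (Fin (m + 1)) (Fin d) ℝ) a = g M := by
    rw [sens, hS'eq, hM_def]
    exact (hg_mono.map_csSup_of_continuousAt hg_cont.continuousAt ⟨_, hmem⟩ hbdd).symm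
  have hMsens : sens p B a = M := rfl
  rw [hkey, hMsens]
  simp only [hg_def]
  rw [max_eq_left hM_pos.le]
  rw [div_eq_div_iff (by linarith) (by positivity)]
  field_simp
  ring
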